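/- Let Z_1, Z_2, ... be 1-injective Banach spaces, X ⊆ Y Banach spaces with Y/X separable, and suppose (T_j) is a sequence of bounded operators T_j : Y → Z_j with sup_j ‖T_j‖ = 1 and ‖T_j x‖ → 0 for every x ∈ X. Then for every ε > 0 there exist bounded operators S_j : Y → Z_j with X ⊆ ker S_j, ‖S_j‖ ≤ 1 + ε/2 for all j, and ‖(T_j − S_j)(y)‖ → 0 for every y ∈ Y. -/

import Mathlib

open Filter Topology
open ENNReal

/-- A Banach space `W` is 1-injective: every bounded operator into `W` from a closed
subspace of any Banach space extends with the same norm. -/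
def IsOneInjective (W : Type*) [NormedAddCommGroup W] [NormedSpace ℝ W] : Prop :=
  ∀ (B : Type) [NormedAddCommGroup B] [NormedSpace ℝ B] [CompleteSpace B]
    (A : Subspace ℝ B), IsClosed (A : Set B) →
    ∀ S : ↥A →L[ℝ] W, ∃ S' : B →L[ℝ] W, (∀ a : ↥A, S' a = S a) ∧ ‖S'‖ = ‖S‖

/-- Kuratowski-type linear isometric embedding of a separable normed space into `ℓ∞`. -/
lemma exists_linearIsometry_lp (E : Type*) [NormedAddCommGroup E] [NormedSpace ℝ E]
    [TopologicalSpace.SeparableSpace E] :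
    Nonempty (E →ₗᵢ[ℝ] lp (fun _ : ℕ => ℝ) ∞) := by
  have hne : Nonempty E := ⟨0⟩
  obtain ⟨d, hd⟩ := TopologicalSpace.exists_dense_seq E
  choose g hg1 hg2 using fun k => exists_dual_vector'' ℝ (d k)
  have hb : ∀ (v : E) (k : ℕ), ‖g k v‖ ≤ ‖v‖ := fun v k =>
    ((g k).le_opNorm v).trans (mul_le_of_le_one_left (norm_nonneg v) (hg1 k))
  have hmem : ∀ v : E, Memℓp (fun k => g k v) ∞ := fun v =>
    memℓp_infty ⟨‖v‖, by rintro x ⟨k, rfl⟩; exact hb v k⟩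
  let φ : E →ₗ[ℝ] lp (fun _ : ℕ => ℝ) ∞ :=
    { toFun := fun v => ⟨fun k => g k v, hmem v⟩
      map_add' := fun u v => by
        apply lp.ext
        rw [lp.coeFn_add]
        funext k
        simp [map_add]
      map_smul' := fun c v => by
        apply lp.ext
        rw [lp.coeFn_smul]
        funext k
        simp }
  have happ : ∀ (v : E) (k : ℕ), (φ v) k = g k v := fun v k => rfl
  have hnorm : ∀ v, ‖φ v‖ = ‖v‖ := by
    intro v
    refine le_antisymm (lp.norm_le_of_forall_le (norm_nonneg v) fun k => ?_) ?_
    · rw [happ]; exact hb v k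
    · refine le_of_forall_pos_le_add fun δ hδ => ?_
      obtain ⟨k, hk⟩ := Metric.denseRange_iff.mp hd v (δ / 2) (by positivity)
      have h1 : g k v ≤ ‖φ v‖ := by
        have h := lp.norm_apply_le_norm (ENNReal.top_ne_zero) (φ v) k
        rw [happ] at h
        exact (le_abs_self _).trans ((Real.norm_eq_abs _).symm ▸ h)
      have h2 : |g k (v - d k)| ≤ ‖v - d k‖ := (Real.norm_eq_abs _) ▸ hb (v - d k) k
      have hdist : ‖v - d k‖ < δ / 2 := by
        rw [← dist_eq_norm]; exact hk
      have h3 : ‖v‖ - ‖d k‖ ≤ ‖v - d k‖ := norm_sub_norm_le v (d k)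
      have h4 : g k (v - d k) = g k v - g k (d k) := map_sub _ _ _
      have h5 : g k (d k) = ‖d k‖ := hg2 k
      have := abs_le.mp h2
      linarith [this.1, this.2]
  exact ⟨⟨φ, hnorm⟩⟩

set_option maxHeartbeats 1000000 in
set_option synthInstance.maxHeartbeats 1000000 in
theorem stmt5 (Z : ℕ → Type*) [∀ j, NormedAddCommGroup (Z j)] [∀ j, NormedSpace ℝ (Z j)]
    [∀ j, CompleteSpace (Z j)] (hinj : ∀ j, IsOneInjective (Z j))
    {Y : Type*} [NormedAddCommGroup Y] [NormedSpace ℝ Y] [CompleteSpace Y]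
    (X : Subspace ℝ Y) (hX : IsClosed (X : Set Y))
    [TopologicalSpace.SeparableSpace (Y ⧸ X)]
    (T : ∀ j : ℕ, Y →L[ℝ] Z j) (hTsup : ⨆ j, ‖T j‖ = 1)
    (hTX : ∀ x ∈ X, Tendsto (fun j => ‖T j x‖) atTop (𝓝 0)) :
    ∀ ε > (0 : ℝ), ∃ S : ∀ j : ℕ, Y →L[ℝ] Z j,
      (∀ j, ∀ x ∈ X, S j x = 0) ∧ (∀ j, ‖S j‖ ≤ 1 + ε / 2) ∧
      (∀ y : Y, Tendsto (fun j => ‖T j y - S j y‖) atTop (𝓝 0)) := by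
  intro ε hε
  haveI : IsClosed (X : Set Y) := hX
  haveI : Nonempty (Y ⧸ X) := ⟨0⟩
  -- norms of the T j are at most 1
  have hT1 : ∀ j, ‖T j‖ ≤ 1 := by
    intro j
    by_cases hb : BddAbove (Set.range fun j => ‖T j‖)
    · calc ‖T j‖ ≤ ⨆ j, ‖T j‖ := le_ciSup hb j
        _ = 1 := hTsup
    · rw [Real.iSup_of_not_bddAbove hb] at hTsup; norm_num at hTsup
  -- the quotient map as a continuous linear map
  let qc : Y →L[ℝ] Y ⧸ X := X.mkQ.mkContinuous 1 (fun y => by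
    simpa [one_mul] using Submodule.Quotient.norm_mk_le X y)
  have hqc : ∀ y : Y, qc y = Submodule.Quotient.mk y := fun y => rfl
  have hqnorm : ∀ y : Y, ‖qc y‖ ≤ ‖y‖ := fun y => Submodule.Quotient.norm_mk_le X y
  -- the isometric embedding of the quotient into ℓ∞
  obtain ⟨ι⟩ := exists_linearIsometry_lp (Y ⧸ X)
  -- a (possibly discontinuous) linear section of the quotient map
  obtain ⟨L, hL⟩ := Module.projective_lifting_property X.mkQ
    (LinearMap.id : (Y ⧸ X) →ₗ[ℝ] (Y ⧸ X)) X.mkQ_surjective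
  have hLq : ∀ v : Y ⧸ X, Submodule.Quotient.mk (L v) = v := fun v => LinearMap.congr_fun hL v
  -- dense sequence in the quotient
  obtain ⟨d, hd⟩ := TopologicalSpace.exists_dense_seq (Y ⧸ X)
  -- the finite-dimensional pieces
  set E : ℕ → Submodule ℝ (Y ⧸ X) := fun n => Submodule.span ℝ (d '' Set.Iio n) with hE
  have hEfd : ∀ n, FiniteDimensional ℝ (E n) := fun n =>
    Module.Finite.span_of_finite ℝ ((Set.finite_Iio n).image d)
  -- Claim A : uniform bound on the finite-dimensional pieces, for large j
  have claimA : ∀ n : ℕ, ∃ N : ℕ, ∀ j, N ≤ j →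
      ∀ u : ↥(E n), ‖T j (L ↑u)‖ ≤ (1 + ε / 2) * ‖u‖ := by
    intro n
    haveI := hEfd n
    set δ := ε / 8 with hδdef
    have hδ : 0 < δ := by positivity
    -- the restriction of L to E n is continuous
    let Lr : ↥(E n) →ₗ[ℝ] Y := L.comp (E n).subtype
    have hLrc : Continuous Lr := Lr.continuous_of_finiteDimensional
    have hK : IsCompact (Lr '' Metric.closedBall 0 1) :=
      (isCompact_closedBall _ _).image hLrc
    obtain ⟨t, hts, htfin, htcov⟩ := hK.finite_cover_balls hδ
    -- choose nearby points of X for each center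
    have hch : ∀ c : Y, ∃ x, x ∈ X ∧ (c ∈ t → ‖c - x‖ < 1 + δ) := by
      intro c
      by_cases hc : c ∈ t
      · obtain ⟨u, hu, huc⟩ := hts hc
        have hqc' : (Submodule.Quotient.mk c : Y ⧸ X) = (u : Y ⧸ X) := by
          rw [← huc]; exact hLq _
        have hnormc : ‖(Submodule.Quotient.mk c : Y ⧸ X)‖ ≤ 1 := by
          rw [hqc', ← Submodule.coe_norm]
          simpa using mem_closedBall_zero_iff.mp hu
        obtain ⟨m, hm1, hm2⟩ :=
          Submodule.Quotient.norm_mk_lt (Submodule.Quotient.mk c : Y ⧸ X) hδ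
        refine ⟨c - m, ?_, fun _ => ?_⟩
        · rw [← X.ker_mkQ]
          refine LinearMap.mem_ker.mpr ?_
          rw [map_sub]
          simp only [Submodule.mkQ_apply]
          rw [hm1, sub_self]
        · have : c - (c - m) = m := by abel
          rw [this]
          linarith
      · exact ⟨0, X.zero_mem, fun h => absurd h hc⟩
    choose xf hxf1 hxf2 using hch
    have hev : ∀ᶠ j in atTop, ∀ c ∈ htfin.toFinset, ‖T j (xf c)‖ < δ := by
      rw [Filter.eventually_all_finset]
      intro c _
      exact (hTX (xf c) (hxf1 c)).eventually_lt_const hδ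
    obtain ⟨N, hN⟩ := eventually_atTop.mp hev
    refine ⟨N, ?_⟩
    have hball : ∀ j, N ≤ j → ∀ u : ↥(E n), ‖u‖ ≤ 1 → ‖T j (L ↑u)‖ ≤ 1 + ε / 2 := by
      intro j hj u hu
      have hvK : Lr u ∈ Lr '' Metric.closedBall 0 1 :=
        Set.mem_image_of_mem _ (mem_closedBall_zero_iff.mpr hu)
      obtain ⟨c, hc, hvc⟩ := Set.mem_iUnion₂.mp (htcov hvK)
      have hdist : ‖Lr u - c‖ < δ := by
        rw [← dist_eq_norm]; exact Metric.mem_ball.mp hvc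
      have hx : ‖c - xf c‖ < 1 + δ := hxf2 c hc
      have hTx : ‖T j (xf c)‖ < δ := hN j hj c (htfin.mem_toFinset.mpr hc)
      have hsplit : T j (L ↑u) = T j (Lr u - xf c) + T j (xf c) := by
        rw [← map_add]
        congr 1
        show (L ↑u : Y) = _
        have : Lr u = L ↑u := rfl
        rw [← this]; abel
      rw [hsplit]
      have h1 : ‖T j (Lr u - xf c)‖ ≤ ‖Lr u - xf c‖ :=
        ((T j).le_opNorm _).trans (mul_le_of_le_one_left (norm_nonneg _) (hT1 j))
      have h2 : ‖Lr u - xf c‖ ≤ ‖Lr u - c‖ + ‖c - xf c‖ := by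
        have : Lr u - xf c = (Lr u - c) + (c - xf c) := by abel
        rw [this]; exact norm_add_le _ _
      calc ‖T j (Lr u - xf c) + T j (xf c)‖ ≤ ‖T j (Lr u - xf c)‖ + ‖T j (xf c)‖ :=
            norm_add_le _ _
        _ ≤ (‖Lr u - c‖ + ‖c - xf c‖) + ‖T j (xf c)‖ := by linarith
        _ ≤ 1 + 3 * δ := by linarith
        _ ≤ 1 + ε / 2 := by rw [hδdef]; linarith
    intro j hj u
    by_cases h0 : ‖u‖ = 0
    · have hu0 : u = 0 := norm_eq_zero.mp h0
      rw [hu0]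
      simp
    · have hupos : 0 < ‖u‖ := lt_of_le_of_ne (norm_nonneg u) (Ne.symm h0)
      set u' : ↥(E n) := ‖u‖⁻¹ • u with hu'
      have hu'norm : ‖u'‖ = 1 := by
        rw [hu', norm_smul, norm_inv, Real.norm_eq_abs, abs_of_pos hupos,
          inv_mul_cancel₀ h0]
      have := hball j hj u' hu'norm.le
      have hL' : (u' : Y ⧸ X) = ‖u‖⁻¹ • (u : Y ⧸ X) := rfl
      rw [hL', map_smul, map_smul, norm_smul, norm_inv, Real.norm_eq_abs,
        abs_of_pos hupos] at this
      have h3 := mul_le_mul_of_nonneg_left this (norm_nonneg u)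
      rw [← mul_assoc, mul_inv_cancel₀ h0, one_mul] at h3
      rw [mul_comm]
      exact h3
  choose Nf hNf using claimA
  set Nf' : ℕ → ℕ := fun n => if n = 0 then 0 else Nf n with hNf'def
  have hN' : ∀ n j, Nf' n ≤ j → ∀ u : ↥(E n), ‖T j (L ↑u)‖ ≤ (1 + ε / 2) * ‖u‖ := by
    intro n j h u
    rcases Nat.eq_zero_or_pos n with hn | hn
    · subst hn
      have hu0 : u = 0 := by
        have hmem : (u : Y ⧸ X) ∈ E 0 := u.2
        have hE0 : E 0 = ⊥ := by
          show Submodule.span ℝ (d '' Set.Iio 0) = ⊥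
          have himg : d '' Set.Iio 0 = ∅ := by
            rw [Set.eq_empty_iff_forall_notMem]
            rintro v ⟨k, hk, -⟩
            exact Nat.not_lt_zero k hk
          rw [himg, Submodule.span_empty]
        have hmem2 : (u : Y ⧸ X) ∈ (⊥ : Submodule ℝ (Y ⧸ X)) := by
          rw [← hE0]; exact hmem
        exact Subtype.ext ((Submodule.mem_bot _).mp hmem2)
      rw [hu0]
      simp
    · exact hNf n j (by simpa [hNf'def, Nat.pos_iff_ne_zero.mp hn] using h) u
  set nj : ℕ → ℕ := fun j => Nat.findGreatest (fun n => Nf' n ≤ j) j with hnj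
  have hbound : ∀ j, ∀ u : ↥(E (nj j)), ‖T j (L ↑u)‖ ≤ (1 + ε / 2) * ‖u‖ := fun j =>
    hN' _ j (Nat.findGreatest_spec (P := fun n => Nf' n ≤ j) (Nat.zero_le j)
      (by simp [hNf'def]))
  have htend : ∀ n, ∀ᶠ j in atTop, n ≤ nj j := by
    intro n
    filter_upwards [eventually_ge_atTop (max n (Nf' n))] with j hj
    exact Nat.le_findGreatest (le_trans (le_max_left _ _) hj)
      (le_trans (le_max_right _ _) hj)
  -- The extension step
  have hext : ∀ j, ∃ S' : lp (fun _ : ℕ => ℝ) ∞ →L[ℝ] Z j, ‖S'‖ ≤ 1 + ε / 2 ∧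
      ∀ u : ↥(E (nj j)), S' (ι ↑u) = T j (L ↑u) := by
    intro j
    haveI := hEfd (nj j)
    set A : Submodule ℝ (lp (fun _ : ℕ => ℝ) ∞) := (E (nj j)).map ι.toLinearMap with hA
    let eqv : ↥(E (nj j)) ≃ₗ[ℝ] ↥A :=
      Submodule.equivMapOfInjective ι.toLinearMap ι.injective (E (nj j))
    haveI : FiniteDimensional ℝ ↥A := Module.Finite.equiv eqv
    have hAc : IsClosed (A : Set (lp (fun _ : ℕ => ℝ) ∞)) := A.closed_of_finiteDimensional
    let S0 : ↥A →ₗ[ℝ] Z j :=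
      ((T j).toLinearMap.comp (L.comp (E (nj j)).subtype)).comp eqv.symm.toLinearMap
    have hS0 : ∀ a : ↥A, ‖S0 a‖ ≤ (1 + ε / 2) * ‖a‖ := by
      intro a
      have h2 : ‖eqv.symm a‖ = ‖a‖ := by
        rw [Submodule.coe_norm, Submodule.coe_norm, ← ι.norm_map]
        congr 1
        calc ι ↑(eqv.symm a) = ↑(eqv (eqv.symm a)) :=
              (Submodule.coe_equivMapOfInjective_apply _ _ _ _).symm
          _ = ↑a := by rw [LinearEquiv.apply_symm_apply]
      calc ‖S0 a‖ = ‖T j (L ↑(eqv.symm a))‖ := rfl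
        _ ≤ (1 + ε / 2) * ‖eqv.symm a‖ := hbound j (eqv.symm a)
        _ = (1 + ε / 2) * ‖a‖ := by rw [h2]
    obtain ⟨S', hS'1, hS'2⟩ := hinj j (lp (fun _ : ℕ => ℝ) ∞) A hAc
      (S0.mkContinuous (1 + ε / 2) hS0)
    refine ⟨S', ?_, ?_⟩
    · rw [hS'2]; exact S0.mkContinuous_norm_le (by positivity) hS0
    · intro u
      have hmem : ι ↑u ∈ A := Submodule.mem_map_of_mem u.2
      have heq : eqv.symm ⟨ι ↑u, hmem⟩ = u := by
        have : eqv u = ⟨ι ↑u, hmem⟩ :=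
          Subtype.ext (Submodule.coe_equivMapOfInjective_apply _ _ _ _)
        rw [← this, LinearEquiv.symm_apply_apply]
      calc S' (ι ↑u) = (S0.mkContinuous (1 + ε / 2) hS0) ⟨ι ↑u, hmem⟩ :=
            hS'1 ⟨ι ↑u, hmem⟩
        _ = T j (L ↑(eqv.symm ⟨ι ↑u, hmem⟩)) := rfl
        _ = T j (L ↑u) := by rw [heq]
  choose Sext hSn hSa using hext
  refine ⟨fun j => (Sext j).comp (ι.toContinuousLinearMap.comp qc), ?_, ?_, ?_⟩
  · intro j x hx
    have h0 : qc x = 0 := by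
      rw [hqc, Submodule.Quotient.mk_eq_zero]; exact hx
    simp [h0]
  · intro j
    refine ContinuousLinearMap.opNorm_le_bound _ (by positivity) fun y => ?_
    calc ‖((Sext j).comp (ι.toContinuousLinearMap.comp qc)) y‖
        = ‖Sext j (ι.toContinuousLinearMap (qc y))‖ := rfl
      _ ≤ ‖Sext j‖ * ‖ι.toContinuousLinearMap (qc y)‖ := (Sext j).le_opNorm _
      _ = ‖Sext j‖ * ‖qc y‖ := by
          rw [show ι.toContinuousLinearMap (qc y) = ι (qc y) from rfl, ι.norm_map]
      _ ≤ (1 + ε / 2) * ‖y‖ :=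
          mul_le_mul (hSn j) (hqnorm y) (norm_nonneg _) (by positivity)
  · intro y
    rw [Metric.tendsto_atTop]
    intro η hη
    have hη' : 0 < η / (5 + ε) := by positivity
    set η' := η / (5 + ε) with hη'def
    have hηeq : (5 + ε) * η' = η := by
      rw [hη'def]; field_simp
    obtain ⟨k, hk⟩ := Metric.denseRange_iff.mp hd (qc y) η' hη'
    set w : Y := y - L (d k) with hw
    have hmkw : (Submodule.Quotient.mk w : Y ⧸ X) = qc y - d k := by
      rw [hw]
      have : (Submodule.Quotient.mk (y - L (d k)) : Y ⧸ X) = X.mkQ y - X.mkQ (L (d k)) := by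
        rw [← map_sub]; rfl
      rw [this, Submodule.mkQ_apply, Submodule.mkQ_apply, hLq, ← hqc]
    have hnw : ‖(Submodule.Quotient.mk w : Y ⧸ X)‖ < η' := by
      rw [hmkw, ← dist_eq_norm]
      exact hk
    obtain ⟨m, hm1, hm2⟩ :=
      Submodule.Quotient.norm_mk_lt (Submodule.Quotient.mk w : Y ⧸ X) hη'
    have hm2' : ‖m‖ < 2 * η' := by linarith
    set x0 : Y := w - m with hx0
    have hx0X : x0 ∈ X := by
      rw [← X.ker_mkQ]
      refine LinearMap.mem_ker.mpr ?_
      rw [hx0, map_sub]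
      simp only [Submodule.mkQ_apply]
      rw [hm1, sub_self]
    have hev : ∀ᶠ j in atTop,
        ‖T j y - ((Sext j).comp (ι.toContinuousLinearMap.comp qc)) y‖ < η := by
      filter_upwards [htend (k + 1), (hTX x0 hx0X).eventually_lt_const hη'] with j h1 h2
      have hdk : d k ∈ E (nj j) := Submodule.subset_span ⟨k, Set.mem_Iio.mpr (by omega), rfl⟩
      have hu : Sext j (ι (d k)) = T j (L (d k)) := hSa j ⟨d k, hdk⟩
      have hkey : T j y - ((Sext j).comp (ι.toContinuousLinearMap.comp qc)) y
          = T j m + T j x0 - Sext j (ι (qc y - d k)) := by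
        have hsplit : ι (qc y) = ι (d k) + ι (qc y - d k) := by
          rw [← map_add]; congr 1; abel
        have hTw : T j w = T j m + T j x0 := by
          rw [show w = m + x0 by rw [hx0]; abel, map_add]
        calc T j y - ((Sext j).comp (ι.toContinuousLinearMap.comp qc)) y
            = T j y - Sext j (ι (qc y)) := rfl
          _ = T j y - (Sext j (ι (d k)) + Sext j (ι (qc y - d k))) := by
              rw [hsplit, map_add]
          _ = (T j y - T j (L (d k))) - Sext j (ι (qc y - d k)) := by rw [hu]; abel
          _ = T j w - Sext j (ι (qc y - d k)) := by rw [← map_sub, ← hw]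
          _ = T j m + T j x0 - Sext j (ι (qc y - d k)) := by rw [hTw]
      rw [hkey]
      have e1 : ‖T j m‖ ≤ ‖m‖ :=
        ((T j).le_opNorm m).trans (mul_le_of_le_one_left (norm_nonneg m) (hT1 j))
      have e2 : ‖Sext j (ι (qc y - d k))‖ ≤ (1 + ε / 2) * η' := by
        calc ‖Sext j (ι (qc y - d k))‖ ≤ ‖Sext j‖ * ‖ι (qc y - d k)‖ :=
              (Sext j).le_opNorm _
          _ = ‖Sext j‖ * ‖qc y - d k‖ := by rw [ι.norm_map]
          _ ≤ (1 + ε / 2) * η' := by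
              refine mul_le_mul (hSn j) ?_ (norm_nonneg _) (by positivity)
              rw [← dist_eq_norm]; exact hk.le
      have e3 : ‖T j m + T j x0 - Sext j (ι (qc y - d k))‖
          ≤ ‖T j m‖ + ‖T j x0‖ + ‖Sext j (ι (qc y - d k))‖ :=
        (norm_sub_le _ _).trans (add_le_add_left (norm_add_le _ _) _)
      have hfinal : ‖T j m‖ + ‖T j x0‖ + ‖Sext j (ι (qc y - d k))‖ < η := by
        rw [← hηeq]
        nlinarith [hη'.le, hε.le]
      linarith
    obtain ⟨N, hN⟩ := eventually_atTop.mp hev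
    exact ⟨N, fun j hj => by
      rw [Real.dist_eq, sub_zero, abs_norm]
      exact hN j hj⟩
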